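/- Fix γ, α ∈ ℝ and define Q̂(d) = (1/d²)·((2−γ)/2 + γd²/2)² + 2α(d−1) and Ŝ(d) = (2−γ)²/(8d) − γ²d³/24 − (2−γ)γd/4 + αd − αd²/2 + Q̂(1)·d/2 for d > 0. If d > 0 satisfies the conjugate flow equations Q̂(d) = Q̂(1) and Ŝ(d) = Ŝ(1), then d = 1. (Hence the conformal water-wave problem admits no conjugate laminar flows, i.e. no bores.) -/

import Mathlib

/-- Nonexistence of conjugate laminar flows (hence of bores): any depth `d > 0`
with the same Bernoulli constant and flow force as the unit-depth laminar flow
must equal `1`. -/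
theorem no_conjugate_flows (γ α : ℝ)
    (Q S : ℝ → ℝ)
    (hQ : ∀ d : ℝ, Q d = (1 / d ^ 2) * ((2 - γ) / 2 + γ * d ^ 2 / 2) ^ 2 + 2 * α * (d - 1))
    (hS : ∀ d : ℝ, S d = (2 - γ) ^ 2 / (8 * d) - γ ^ 2 * d ^ 3 / 24
      - (2 - γ) * γ * d / 4 + α * d - α * d ^ 2 / 2 + Q 1 * d / 2)
    (d : ℝ) (hd : 0 < d) (hQd : Q d = Q 1) (hSd : S d = S 1) :
    d = 1 := by
  have hd0 : d ≠ 0 := ne_of_gt hd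
  have hq1 : Q 1 = 1 := by rw [hQ]; ring
  rw [hQ d, hq1] at hQd
  rw [hS d, hS 1, hq1] at hSd
  field_simp at hQd hSd
  -- Combining the two conjugate-flow equations eliminates α and yields the key identity.
  have key : d * (d - 1) ^ 3 * (γ ^ 2 * d ^ 2 + 3 * (γ - 2) ^ 2) = 0 := by
    linear_combination (d ^ 2 / 32) * hSd + 3 * d * (d - 1) * hQd
  by_contra hne
  have h1 : d - 1 ≠ 0 := sub_ne_zero.mpr hne
  have hK : γ ^ 2 * d ^ 2 + 3 * (γ - 2) ^ 2 = 0 := by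
    have hne2 : d * (d - 1) ^ 3 ≠ 0 := mul_ne_zero hd0 (pow_ne_zero 3 h1)
    exact (mul_eq_zero.mp key).resolve_left hne2
  -- But γ²d² + 3(γ−2)² > 0 for d > 0.
  nlinarith [sq_nonneg ((γ - 2) * (d ^ 2 + 3) + 2 * d ^ 2), sq_nonneg (γ - 2), sq_nonneg (γ * d), mul_pos hd hd]
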